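/- Let M be a multigraph on n vertices such that 0 ≤ w(xy) ≤ 4 for every pair of distinct vertices x,y, and w(xy) + w(xz) + w(yz) ≤ 10 for every triple of distinct vertices x,y,z. Then e(M) ≤ m(n). -/

import Mathlib

/-- `m n = 3n²/2 - n` for `n` even, `(3n²-1)/2 - n` for `n` odd. -/
def m (n : ℕ) : ℕ := if Even n then 3 * n ^ 2 / 2 - n else (3 * n ^ 2 - 1) / 2 - n

lemma m_even (k : ℕ) : m (2 * k) = 6 * k ^ 2 - 2 * k := by
  have h : Even (2 * k) := even_two_mul k
  have h2 : 3 * (2 * k) ^ 2 = 2 * (6 * k ^ 2) := by ring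
  simp only [m, if_pos h]
  omega

lemma m_odd (k : ℕ) : m (2 * k + 1) = 6 * k ^ 2 + 4 * k := by
  have h : ¬ Even (2 * k + 1) := by rw [Nat.even_iff]; omega
  have h2 : 3 * (2 * k + 1) ^ 2 = 2 * (6 * k ^ 2 + 6 * k + 1) + 1 := by ring
  simp only [m, if_neg h]
  omega

lemma sq_pred (a : ℕ) : a * (a - 1) = a ^ 2 - a := by
  cases a with
  | zero => simp
  | succ j =>
    have h : (j + 1) ^ 2 = (j + 1) * j + (j + 1) := by ring
    simp only [Nat.add_sub_cancel]
    rw [h]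
    omega

lemma fact1 (n : ℕ) : 3 * (n * (n - 1)) ≤ 2 * m n := by
  rcases Nat.even_or_odd n with ⟨k, hk⟩ | ⟨k, hk⟩
  · have hn2 : n = 2 * k := by omega
    rw [hn2, m_even, sq_pred]
    have h : (2 * k) ^ 2 = 4 * k ^ 2 := by ring
    have h3 : k ≤ k ^ 2 := Nat.le_self_pow two_ne_zero k
    rw [h]
    omega
  · have hn2 : n = 2 * k + 1 := by omega
    rw [hn2, m_odd, sq_pred]
    have h : (2 * k + 1) ^ 2 = 4 * k ^ 2 + 4 * k + 1 := by ring
    have h3 : k ≤ k ^ 2 := Nat.le_self_pow two_ne_zero k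
    rw [h]
    omega

lemma fact2 (n : ℕ) (hn : 2 ≤ n) : 2 * m n = 2 * m (n - 2) + 12 * n - 16 := by
  rcases Nat.even_or_odd n with ⟨k, hk⟩ | ⟨k, hk⟩
  · obtain ⟨j, rfl⟩ : ∃ j, k = j + 1 := ⟨k - 1, by omega⟩
    have hn2 : n = 2 * (j + 1) := by omega
    have h1 : 2 * (j + 1) - 2 = 2 * j := by omega
    rw [hn2, h1, m_even, m_even]
    have h2 : (j + 1) ^ 2 = j ^ 2 + 2 * j + 1 := by ring
    have h3 : j ≤ j ^ 2 := Nat.le_self_pow two_ne_zero j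
    rw [h2]
    omega
  · obtain ⟨j, rfl⟩ : ∃ j, k = j + 1 := ⟨k - 1, by omega⟩
    have hn2 : n = 2 * (j + 1) + 1 := by omega
    have h1 : 2 * (j + 1) + 1 - 2 = 2 * j + 1 := by omega
    rw [hn2, h1, m_odd, m_odd]
    have h2 : (j + 1) ^ 2 = j ^ 2 + 2 * j + 1 := by ring
    have h3 : j ≤ j ^ 2 := Nat.le_self_pow two_ne_zero j
    rw [h2]
    omega

lemma sum_offDiag_eq {V : Type*} [DecidableEq V] (s : Finset V) (f : V → V → ℕ) :
    ∑ i ∈ s.offDiag, f i.1 i.2 = ∑ a ∈ s, ∑ b ∈ s.erase a, f a b := by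
  rw [show s.offDiag = (s ×ˢ s).filter (fun a : V × V => a.1 ≠ a.2) by ext; simp [and_assoc], Finset.sum_filter, Finset.sum_product]
  refine Finset.sum_congr rfl fun a _ => ?_
  rw [← Finset.sum_filter]
  congr 1
  ext b
  simp [Finset.mem_erase, ne_comm, eq_comm, and_comm]

lemma key {V : Type*} [DecidableEq V] (w : Sym2 V → ℕ)
    (h4 : ∀ x y : V, x ≠ y → w s(x, y) ≤ 4)
    (h10 : ∀ x y z : V, x ≠ y → x ≠ z → y ≠ z →
      w s(x, y) + w s(x, z) + w s(y, z) ≤ 10) :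
    ∀ (k : ℕ) (s : Finset V), s.card = k →
      ∑ a ∈ s, ∑ b ∈ s.erase a, w s(a, b) ≤ 2 * m k := by
  intro k
  induction k using Nat.strong_induction_on with
  | _ k ih =>
  intro s hs
  by_cases hA : ∀ x ∈ s, ∀ y ∈ s, x ≠ y → w s(x, y) ≤ 3
  · calc ∑ a ∈ s, ∑ b ∈ s.erase a, w s(a, b)
        ≤ ∑ a ∈ s, ∑ _b ∈ s.erase a, 3 := by
          refine Finset.sum_le_sum fun a ha => Finset.sum_le_sum fun b hb => ?_
          exact hA a ha b (Finset.mem_of_mem_erase hb) (Finset.mem_erase.1 hb).1.symm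
      _ = ∑ a ∈ s, (s.card - 1) * 3 := by
          refine Finset.sum_congr rfl fun a ha => ?_
          rw [Finset.sum_const, Finset.card_erase_of_mem ha, smul_eq_mul]
      _ ≤ 2 * m k := by
          rw [Finset.sum_const, smul_eq_mul, hs]
          have := fact1 k
          nlinarith [this]
  · push_neg at hA
    obtain ⟨x, hx, y, hy, hxy, hw⟩ := hA
    have hw4 : w s(x, y) = 4 := le_antisymm (h4 x y hxy) hw
    set t := (s.erase x).erase y with ht
    have hys : y ∈ s.erase x := Finset.mem_erase.2 ⟨hxy.symm, hy⟩
    have hxt : x ∉ t := fun h => (Finset.notMem_erase x s) (Finset.mem_of_mem_erase h)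
    have hyt : y ∉ t := Finset.notMem_erase y _
    have hex : s.erase x = insert y t := (Finset.insert_erase hys).symm
    have hxey : x ∈ s.erase y := Finset.mem_erase.2 ⟨hxy, hx⟩
    have hey : s.erase y = insert x t := by
      rw [ht, Finset.erase_right_comm]
      exact (Finset.insert_erase hxey).symm
    have hst : s = insert x (insert y t) := by
      rw [← hex, Finset.insert_erase hx]
    have hxyt : x ∉ insert y t := by
      simp only [Finset.mem_insert]
      push_neg
      exact ⟨hxy, hxt⟩
    have hcardt : t.card = k - 2 := by
      rw [ht, Finset.card_erase_of_mem hys, Finset.card_erase_of_mem hx, hs]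
      omega
    have hk2 : 2 ≤ k := by
      rw [← hs]
      exact Finset.one_lt_card.2 ⟨x, hx, y, hy, hxy⟩
    -- decompose the double sum
    have hsplit : ∑ a ∈ s, ∑ b ∈ s.erase a, w s(a, b)
        = (∑ b ∈ s.erase x, w s(x, b)) + (∑ b ∈ s.erase y, w s(y, b))
          + ∑ a ∈ t, ∑ b ∈ s.erase a, w s(a, b) := by
      conv_lhs => rw [hst]
      rw [Finset.sum_insert hxyt, Finset.sum_insert hyt, ← hst]
      ring
    have hgx : ∑ b ∈ s.erase x, w s(x, b) = w s(x, y) + ∑ b ∈ t, w s(x, b) := by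
      rw [hex, Finset.sum_insert hyt]
    have hgy : ∑ b ∈ s.erase y, w s(y, b) = w s(x, y) + ∑ b ∈ t, w s(y, b) := by
      rw [hey, Finset.sum_insert hxt, Sym2.eq_swap]
    have hga : ∀ a ∈ t, ∑ b ∈ s.erase a, w s(a, b)
        = w s(x, a) + w s(y, a) + ∑ b ∈ t.erase a, w s(a, b) := by
      intro a ha
      have hax : a ≠ x := fun h => hxt (h ▸ ha)
      have hay : a ≠ y := fun h => hyt (h ▸ ha)
      have : s.erase a = insert x (insert y (t.erase a)) := by
        rw [hst, Finset.erase_insert_of_ne hax.symm, Finset.erase_insert_of_ne hay.symm]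
      rw [this, Finset.sum_insert, Finset.sum_insert
        (fun h => hyt (Finset.mem_of_mem_erase h))]
      · rw [Sym2.eq_swap (a := a) (b := x), Sym2.eq_swap (a := a) (b := y)]
        ring
      · simp only [Finset.mem_insert]
        push_neg
        exact ⟨hxy, fun h => hxt (Finset.mem_of_mem_erase h)⟩
    have hsum6 : ∀ a ∈ t, w s(x, a) + w s(y, a) ≤ 6 := by
      intro a ha
      have hax : x ≠ a := fun h => hxt (h ▸ ha)
      have hay : y ≠ a := fun h => hyt (h ▸ ha)
      have := h10 x y a hxy hax hay
      omega
    have htsum : ∑ a ∈ t, (w s(x, a) + w s(y, a)) ≤ 6 * t.card := by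
      calc ∑ a ∈ t, (w s(x, a) + w s(y, a)) ≤ ∑ _a ∈ t, 6 := Finset.sum_le_sum hsum6
        _ = 6 * t.card := by simp [mul_comm]
    have hih : ∑ a ∈ t, ∑ b ∈ t.erase a, w s(a, b) ≤ 2 * m (k - 2) :=
      ih (k - 2) (by omega) t hcardt
    have hrw : ∑ a ∈ t, ∑ b ∈ s.erase a, w s(a, b)
        = ∑ a ∈ t, (w s(x, a) + w s(y, a)) + ∑ a ∈ t, ∑ b ∈ t.erase a, w s(a, b) := by
      rw [← Finset.sum_add_distrib]
      exact Finset.sum_congr rfl fun a ha => by rw [hga a ha]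
    have hfin := fact2 k hk2
    rw [hsplit, hgx, hgy, hrw]
    have hb : ∑ b ∈ t, w s(x, b) + ∑ b ∈ t, w s(y, b)
        = ∑ a ∈ t, (w s(x, a) + w s(y, a)) := (Finset.sum_add_distrib).symm
    omega

/-- The multigraph lemma: if every pair has multiplicity at most 4 and every triple
has total multiplicity at most 10, then the total number of edges is at most `m n`. -/
theorem multigraph_lemma {V : Type*} [Fintype V] [DecidableEq V] (n : ℕ)
    (hcard : Fintype.card V = n) (w : Sym2 V → ℕ)
    (h4 : ∀ x y : V, x ≠ y → w s(x, y) ≤ 4)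
    (h10 : ∀ x y z : V, x ≠ y → x ≠ z → y ≠ z →
      w s(x, y) + w s(x, z) + w s(y, z) ≤ 10) :
    ∑ p ∈ Finset.univ.filter (fun p : Sym2 V => ¬ p.IsDiag), w p ≤ m n := by
  letI : LinearOrder V := LinearOrder.lift' (Fintype.equivFin V) (Fintype.equivFin V).injective
  have hkey := key w h4 h10 n (Finset.univ) (by rw [Finset.card_univ, hcard])
  rw [← sum_offDiag_eq] at hkey
  have h1 : ∑ p ∈ Finset.univ.filter (fun p : Sym2 V => ¬ p.IsDiag), w p
      = ∑ i ∈ Finset.univ.offDiag with i.1 < i.2, w s(i.1, i.2) := by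
    have hset : Finset.univ.filter (fun p : Sym2 V => ¬ p.IsDiag)
        = (Finset.univ : Finset V).sym2.filter (fun i => ¬ i.IsDiag) := by
      ext p
      simp [Finset.mem_sym2_iff]
    rw [hset]
    convert Finset.sum_sym2_filter_not_isDiag (Finset.univ : Finset V) w using 2 <;>
      · ext p
        simp [Finset.mem_sym2_iff]
  have h2 : ∑ i ∈ (Finset.univ : Finset V).offDiag, w s(i.1, i.2)
      = ∑ i ∈ Finset.univ.offDiag with i.1 < i.2, w s(i.1, i.2)
        + ∑ i ∈ Finset.univ.offDiag with ¬ i.1 < i.2, w s(i.1, i.2) :=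
    (Finset.sum_filter_add_sum_filter_not _ _ _).symm
  have h3 : ∑ i ∈ Finset.univ.offDiag with ¬ i.1 < i.2, w s(i.1, i.2)
      = ∑ i ∈ Finset.univ.offDiag with i.1 < i.2, w s(i.1, i.2) := by
    refine Finset.sum_nbij' (fun i => i.swap) (fun i => i.swap) ?_ ?_ ?_ ?_ ?_
    · rintro ⟨a, b⟩ h
      simp only [Finset.mem_filter, Finset.mem_offDiag, Finset.mem_univ, true_and,
        Prod.fst_swap, Prod.snd_swap, Prod.swap_prod_mk] at h ⊢
      obtain ⟨hne, hnlt⟩ := h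
      exact ⟨hne.symm, lt_of_le_of_ne (le_of_not_gt hnlt) hne.symm⟩
    · rintro ⟨a, b⟩ h
      simp only [Finset.mem_filter, Finset.mem_offDiag, Finset.mem_univ, true_and,
        Prod.fst_swap, Prod.snd_swap, Prod.swap_prod_mk] at h ⊢
      obtain ⟨hne, hlt⟩ := h
      exact ⟨hne.symm, not_lt.2 (le_of_lt hlt)⟩
    · rintro ⟨a, b⟩ _; rfl
    · rintro ⟨a, b⟩ _; rfl
    · rintro ⟨a, b⟩ _
      simp [Sym2.eq_swap]
  rw [h1]
  omega
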